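/- For every real number p with 1 < p < 2 there exists a constant d > 0 such that for all vectors x, y ∈ ℝ^N with ‖x‖ + ‖y‖ > 0, one has ⟨|x|^{p-2} x − |y|^{p-2} y, x − y⟩ ≥ d (‖x‖ + ‖y‖)^{p-2} ‖x − y‖². -/

import Mathlib

open Real

-- a^(p-2) * a^2 = a^p
lemma aux_pow_sq (p a : ℝ) (hp0 : 0 < p) (hp2 : p ≠ 2) (ha : 0 ≤ a) :
    a ^ (p - 2) * a ^ 2 = a ^ p := by
  rcases eq_or_lt_of_le ha with h | h
  · rw [← h, Real.zero_rpow (by intro hc; apply hp2; linarith [sub_eq_zero.mp hc]),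
      Real.zero_rpow hp0.ne', zero_mul]
  · rw [show (a:ℝ)^2 = a ^ (2:ℝ) by rw [Real.rpow_two], ← Real.rpow_add h]
    ring_nf

-- scalar: b^(p-1) ≤ a^(p-1) + (p-1) * a^(p-2) * (b - a), for 0 ≤ b ≤ a, 0 < a
lemma aux_bern (p a b : ℝ) (hp1 : 1 < p) (hp2 : p < 2) (hb : 0 ≤ b) (hba : b ≤ a) (ha : 0 < a) :
    b ^ (p - 1) ≤ a ^ (p - 1) + (p - 1) * a ^ (p - 2) * (b - a) := by
  have h1 : (b / a) ^ (p - 1) ≤ 1 + (p - 1) * (b / a - 1) := by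
    have := rpow_one_add_le_one_add_mul_self (s := b / a - 1) (p := p - 1)
      (by have : 0 ≤ b / a := div_nonneg hb ha.le; linarith) (by linarith) (by linarith)
    simpa using this
  have h2 : (b / a) ^ (p - 1) = b ^ (p - 1) / a ^ (p - 1) := Real.div_rpow hb ha.le (p-1)
  have h3 : a ^ (p - 2) = a ^ (p - 1) / a := by
    rw [← Real.rpow_sub_one ha.ne']; ring_nf
  have hap : 0 < a ^ (p - 1) := Real.rpow_pos_of_pos ha _
  rw [h2] at h1
  rw [h3]
  have h4 : b ^ (p - 1) ≤ a ^ (p - 1) * (1 + (p - 1) * (b / a - 1)) := by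
    calc b ^ (p-1) = a ^ (p-1) * (b ^ (p-1) / a ^ (p-1)) := by field_simp
    _ ≤ _ := by apply mul_le_mul_of_nonneg_left h1 hap.le
  calc b ^ (p - 1) ≤ a ^ (p - 1) * (1 + (p - 1) * (b / a - 1)) := h4
    _ = a ^ (p - 1) + (p - 1) * (a ^ (p - 1) / a) * (b - a) := by field_simp

-- key scalar inequality, WLOG b ≤ a
lemma key_le (p a b t : ℝ) (hp1 : 1 < p) (hp2 : p < 2) (hb : 0 ≤ b) (hba : b ≤ a)
    (hab : 0 < a + b) (ht : t ≤ a * b) :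
    (p - 1) / 2 * (a + b) ^ (p - 2) * (a ^ 2 + b ^ 2 - 2 * t) ≤
      a ^ p + b ^ p - (a ^ (p - 2) + b ^ (p - 2)) * t := by
  have ha : 0 < a := by linarith
  have habp : 0 < (a + b) ^ (p - 2) := Real.rpow_pos_of_pos hab _
  have hap2 : 0 < a ^ (p - 2) := Real.rpow_pos_of_pos ha _
  have hbp2 : 0 ≤ b ^ (p - 2) := Real.rpow_nonneg hb _
  -- (a+b)^(p-2) ≤ a^(p-2)
  have hmono : (a + b) ^ (p - 2) ≤ a ^ (p - 2) :=
    Real.rpow_le_rpow_of_nonpos ha (by linarith) (by linarith)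
  have hA : (p - 1) * (a + b) ^ (p - 2) ≤ a ^ (p - 2) + b ^ (p - 2) := by
    nlinarith
  -- endpoint: t = a*b
  have hB : (p - 1) / 2 * (a + b) ^ (p - 2) * (a - b) ^ 2 ≤
      a ^ p + b ^ p - (a ^ (p - 2) + b ^ (p - 2)) * (a * b) := by
    rcases eq_or_lt_of_le hb with hb0 | hb0
    · -- b = 0
      rw [← hb0]
      have h1 : (0:ℝ) ^ (p-2) = 0 := Real.zero_rpow (by intro hc; nlinarith [sub_eq_zero.mp hc])
      have h2 : (0:ℝ) ^ p = 0 := Real.zero_rpow (by positivity)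
      have hpa : a ^ (p - 2) * a ^ 2 = a ^ p := aux_pow_sq p a (by linarith) (by linarith) ha.le
      rw [h1, h2]
      simp only [add_zero, mul_zero, sub_zero]
      nlinarith [Real.rpow_pos_of_pos ha p]
    · -- 0 < b
      have hbern := aux_bern p a b hp1 hp2 hb hba ha
      have hfact : a ^ p + b ^ p - (a ^ (p - 2) + b ^ (p - 2)) * (a * b)
          = (a - b) * (a ^ (p - 1) - b ^ (p - 1)) := by
        have e1 : a ^ (p - 2) * a = a ^ (p - 1) := by
          rw [← Real.rpow_add_one ha.ne']; ring_nf
        have e2 : b ^ (p - 2) * b = b ^ (p - 1) := by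
          rw [← Real.rpow_add_one hb0.ne']; ring_nf
        have e3 : a ^ (p - 1) * a = a ^ p := by
          rw [← Real.rpow_add_one ha.ne']; ring_nf
        have e4 : b ^ (p - 1) * b = b ^ p := by
          rw [← Real.rpow_add_one hb0.ne']; ring_nf
        nlinarith [e1, e2, e3, e4]
      rw [hfact]
      -- a^(p-1) - b^(p-1) ≥ (p-1) * a^(p-2) * (a-b)
      have h5 : (p - 1) * a ^ (p - 2) * (a - b) ≤ a ^ (p - 1) - b ^ (p - 1) := by nlinarith
      have h6 : (p - 1) * (a + b) ^ (p - 2) * (a - b) ≤ (p - 1) * a ^ (p - 2) * (a - b) := by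
        have := mul_le_mul_of_nonneg_left
          (mul_le_mul_of_nonneg_right hmono (by linarith : (0:ℝ) ≤ a - b))
          (by linarith : (0:ℝ) ≤ p - 1)
        nlinarith [this]
      have h5' : (p - 1) * (a + b) ^ (p - 2) * (a - b) ≤ a ^ (p - 1) - b ^ (p - 1) := by linarith
      have h7 := mul_le_mul_of_nonneg_left h5' (show (0:ℝ) ≤ a - b by linarith)
      nlinarith [h7, mul_nonneg (mul_nonneg (by linarith : (0:ℝ) ≤ p - 1) habp.le) (sq_nonneg (a - b))]
  -- combine via linearity in t
  nlinarith [mul_le_mul_of_nonneg_right hA (by linarith : (0:ℝ) ≤ a * b - t)]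

/-- For every real `1 < p < 2` there is `d > 0` such that for all `x y : ℝ^N`
with `‖x‖ + ‖y‖ > 0`,
`⟪‖x‖^(p-2) • x - ‖y‖^(p-2) • y, x - y⟫ ≥ d * (‖x‖ + ‖y‖)^(p-2) * ‖x - y‖^2`. -/
theorem stmt2 (p : ℝ) (hp1 : 1 < p) (hp2 : p < 2) (N : ℕ) :
    ∃ d : ℝ, 0 < d ∧ ∀ x y : EuclideanSpace ℝ (Fin N), 0 < ‖x‖ + ‖y‖ →
      d * (‖x‖ + ‖y‖) ^ (p - 2) * ‖x - y‖ ^ 2 ≤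
        inner ℝ ((‖x‖ ^ (p - 2)) • x - (‖y‖ ^ (p - 2)) • y) (x - y) := by
  refine ⟨(p - 1) / 2, by linarith, fun x y hxy => ?_⟩
  set a := ‖x‖ with haa
  set b := ‖y‖ with hbb
  have ha : 0 ≤ a := norm_nonneg x
  have hb : 0 ≤ b := norm_nonneg y
  set t : ℝ := inner ℝ x y with htt
  have hcs : t ≤ a * b := real_inner_le_norm x y
  have hinner : (inner ℝ ((a ^ (p - 2)) • x - (b ^ (p - 2)) • y) (x - y) : ℝ)
      = a ^ p + b ^ p - (a ^ (p - 2) + b ^ (p - 2)) * t := by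
    rw [inner_sub_left, inner_sub_right, inner_sub_right, real_inner_smul_left,
      real_inner_smul_left, real_inner_smul_left, real_inner_smul_left,
      real_inner_self_eq_norm_sq, real_inner_self_eq_norm_sq]
    rw [aux_pow_sq p a (by linarith) (by linarith) ha, aux_pow_sq p b (by linarith) (by linarith) hb]
    simp only [real_inner_comm y x, htt]
    ring
  have hnorm : ‖x - y‖ ^ 2 = a ^ 2 + b ^ 2 - 2 * t := by
    rw [norm_sub_sq_real]; ring
  rw [hinner, hnorm]
  rcases le_total b a with h | h
  · exact key_le p a b t hp1 hp2 hb h hxy hcs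
  · have := key_le p b a t hp1 hp2 ha h (by linarith) (by rw [mul_comm]; exact hcs)
    calc (p-1)/2 * (a + b) ^ (p-2) * (a^2 + b^2 - 2*t)
        = (p-1)/2 * (b + a) ^ (p-2) * (b^2 + a^2 - 2*t) := by ring_nf
      _ ≤ b ^ p + a ^ p - (b ^ (p-2) + a ^ (p-2)) * t := this
      _ = a ^ p + b ^ p - (a ^ (p-2) + b ^ (p-2)) * t := by ring
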